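/- Four distinct points a, b, c, d in the plane in general position are in convex position if and only if the sign pattern (χ(a,b,c), χ(b,c,d), χ(c,d,a), χ(d,a,b)) is one of the six patterns (+,+,+,+), (−,−,−,−), (+,+,−,−), (−,−,+,+), (−,+,+,−), (+,−,−,+). -/

import Mathlib

def GenPos (S : Set (ℝ × ℝ)) : Prop :=
  ∀ a ∈ S, ∀ b ∈ S, ∀ c ∈ S, a ≠ b → a ≠ c → b ≠ c →
    ¬ Collinear ℝ ({a, b, c} : Set (ℝ × ℝ))

def ConvexPos (S : Set (ℝ × ℝ)) : Prop :=
  ∀ p ∈ S, p ∉ convexHull ℝ (S \ {p})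

noncomputable def det2 (a b c : ℝ × ℝ) : ℝ :=
  (b.1 - a.1) * (c.2 - a.2) - (b.2 - a.2) * (c.1 - a.1)

noncomputable def chi (a b c : ℝ × ℝ) : ℝ := Real.sign (det2 a b c)

lemma collinear_of_det2 {a b c : ℝ × ℝ} (h : det2 a b c = 0) :
    Collinear ℝ ({a, b, c} : Set (ℝ × ℝ)) := by
  rw [collinear_iff_exists_forall_eq_smul_vadd]
  by_cases hab : b = a
  · refine ⟨a, c - a, ?_⟩
    rintro p hp
    simp only [Set.mem_insert_iff, Set.mem_singleton_iff] at hp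
    rcases hp with rfl | rfl | rfl
    · exact ⟨0, by simp⟩
    · exact ⟨0, by simp [hab]⟩
    · exact ⟨1, by simp⟩
  · refine ⟨a, b - a, ?_⟩
    rintro p hp
    simp only [Set.mem_insert_iff, Set.mem_singleton_iff] at hp
    have hab' : b.1 ≠ a.1 ∨ b.2 ≠ a.2 := by
      by_contra h'
      push_neg at h'
      exact hab (Prod.ext h'.1 h'.2)
    rcases hp with rfl | rfl | rfl
    · exact ⟨0, by simp⟩
    · exact ⟨1, by simp⟩
    · rcases hab' with h1 | h2
      · refine ⟨(p.1 - a.1) / (b.1 - a.1), ?_⟩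
        have hne : b.1 - a.1 ≠ 0 := sub_ne_zero.mpr h1
        simp only [det2] at h
        apply Prod.ext
        · show p.1 = (p.1 - a.1) / (b.1 - a.1) * (b.1 - a.1) + a.1
          field_simp
          ring
        · show p.2 = (p.1 - a.1) / (b.1 - a.1) * (b.2 - a.2) + a.2
          field_simp
          linear_combination h
      · refine ⟨(p.2 - a.2) / (b.2 - a.2), ?_⟩
        have hne : b.2 - a.2 ≠ 0 := sub_ne_zero.mpr h2
        simp only [det2] at h
        apply Prod.ext
        · show p.1 = (p.2 - a.2) / (b.2 - a.2) * (b.1 - a.1) + a.1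
          field_simp
          linear_combination -h
        · show p.2 = (p.2 - a.2) / (b.2 - a.2) * (b.2 - a.2) + a.2
          field_simp
          ring

lemma affine_nonneg_hull (g : ℝ × ℝ → ℝ) (K A B : ℝ) (hg : ∀ y, g y = K + A * y.1 + B * y.2)
    (s : Set (ℝ × ℝ)) (hs : ∀ y ∈ s, 0 ≤ g y) {x : ℝ × ℝ} (hx : x ∈ convexHull ℝ s) :
    0 ≤ g x := by
  have hconv : Convex ℝ {y : ℝ × ℝ | 0 ≤ g y} := by
    intro y1 hy1 y2 hy2 u v hu hv huv
    simp only [Set.mem_setOf_eq, hg] at *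
    have h1 : (u • y1 + v • y2).1 = u * y1.1 + v * y2.1 := rfl
    have h2 : (u • y1 + v • y2).2 = u * y1.2 + v * y2.2 := rfl
    rw [h1, h2]
    have hu' : u = 1 - v := by linarith
    subst hu'
    nlinarith [mul_nonneg hu hy1, mul_nonneg hv hy2]
  exact convexHull_min hs hconv hx

lemma mem_triangle_iff (p q r x : ℝ × ℝ) (hD : det2 p q r ≠ 0) :
    x ∈ convexHull ℝ ({p, q, r} : Set (ℝ × ℝ)) ↔
      0 ≤ det2 x q r * det2 p q r ∧ 0 ≤ det2 p x r * det2 p q r ∧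
        0 ≤ det2 p q x * det2 p q r := by
  constructor
  · intro hx
    refine ⟨?_, ?_, ?_⟩
    · refine affine_nonneg_hull (fun y => det2 y q r * det2 p q r)
        ((q.1 * r.2 - q.2 * r.1) * det2 p q r) ((q.2 - r.2) * det2 p q r)
        ((r.1 - q.1) * det2 p q r) (fun y => by simp only [det2]; ring) _ ?_ hx
      rintro y hy
      simp only [Set.mem_insert_iff, Set.mem_singleton_iff] at hy
      show 0 ≤ det2 y q r * det2 p q r
      rcases hy with h | h | h <;> rw [h]
      · exact mul_self_nonneg _
      · rw [show det2 q q r = 0 from by simp only [det2]; ring, zero_mul]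
      · rw [show det2 r q r = 0 from by simp only [det2]; ring, zero_mul]
    · refine affine_nonneg_hull (fun y => det2 p y r * det2 p q r)
        ((p.2 * r.1 - p.1 * r.2) * det2 p q r) ((r.2 - p.2) * det2 p q r)
        ((p.1 - r.1) * det2 p q r) (fun y => by simp only [det2]; ring) _ ?_ hx
      rintro y hy
      simp only [Set.mem_insert_iff, Set.mem_singleton_iff] at hy
      show 0 ≤ det2 p y r * det2 p q r
      rcases hy with h | h | h <;> rw [h]
      · rw [show det2 p p r = 0 from by simp only [det2]; ring, zero_mul]
      · exact mul_self_nonneg _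
      · rw [show det2 p r r = 0 from by simp only [det2]; ring, zero_mul]
    · refine affine_nonneg_hull (fun y => det2 p q y * det2 p q r)
        ((p.1 * q.2 - p.2 * q.1) * det2 p q r) ((p.2 - q.2) * det2 p q r)
        ((q.1 - p.1) * det2 p q r) (fun y => by simp only [det2]; ring) _ ?_ hx
      rintro y hy
      simp only [Set.mem_insert_iff, Set.mem_singleton_iff] at hy
      show 0 ≤ det2 p q y * det2 p q r
      rcases hy with h | h | h <;> rw [h]
      · rw [show det2 p q p = 0 from by simp only [det2]; ring, zero_mul]
      · rw [show det2 p q q = 0 from by simp only [det2]; ring, zero_mul]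
      · exact mul_self_nonneg _
  · rintro ⟨hA, hB, hC⟩
    set D := det2 p q r with hDdef
    set α := det2 x q r / D with hα
    set β := det2 p x r / D with hβ
    set γ := det2 p q x / D with hγ
    have hα0 : 0 ≤ α := by
      rw [hα, show det2 x q r / D = det2 x q r * D / (D * D) from by field_simp]
      exact div_nonneg hA (mul_self_nonneg D)
    have hβ0 : 0 ≤ β := by
      rw [hβ, show det2 p x r / D = det2 p x r * D / (D * D) from by field_simp]
      exact div_nonneg hB (mul_self_nonneg D)
    have hγ0 : 0 ≤ γ := by
      rw [hγ, show det2 p q x / D = det2 p q x * D / (D * D) from by field_simp]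
      exact div_nonneg hC (mul_self_nonneg D)
    have hsum : α + β + γ = 1 := by
      have hs : det2 x q r + det2 p x r + det2 p q x = det2 p q r := by
        simp only [det2]; ring
      rw [hα, hβ, hγ]
      field_simp
      linarith [hs]
    have hcomb : α • p + β • q + γ • r = x := by
      have h1 : det2 x q r * p.1 + det2 p x r * q.1 + det2 p q x * r.1 = det2 p q r * x.1 := by
        simp only [det2]; ring
      have h2 : det2 x q r * p.2 + det2 p x r * q.2 + det2 p q x * r.2 = det2 p q r * x.2 := by
        simp only [det2]; ring
      apply Prod.ext
      · show α * p.1 + β * q.1 + γ * r.1 = x.1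
        rw [hα, hβ, hγ]
        field_simp
        linarith [h1]
      · show α * p.2 + β * q.2 + γ * r.2 = x.2
        rw [hα, hβ, hγ]
        field_simp
        linarith [h2]
    refine mem_convexHull_of_exists_fintype (ι := Fin 3) ![α, β, γ] ![p, q, r] ?_ ?_ ?_ ?_
    · intro i; fin_cases i <;> simpa using by assumption
    · simp [Fin.sum_univ_three]; linarith [hsum]
    · intro i; fin_cases i <;> simp
    · rw [Fin.sum_univ_three]; simpa using hcomb

set_option maxHeartbeats 1600000 in
lemma key_signs (D1 D2 D3 D4 : ℝ) (h1 : D1 ≠ 0) (h2 : D2 ≠ 0) (h3 : D3 ≠ 0) (h4 : D4 ≠ 0)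
    (hid : D1 + D3 = D2 + D4) :
    ((¬ (0 ≤ D3 * D2 ∧ 0 ≤ -D4 * D2 ∧ 0 ≤ D1 * D2)) ∧
     (¬ (0 ≤ D2 * D3 ∧ 0 ≤ D4 * D3 ∧ 0 ≤ -D1 * D3)) ∧
     (¬ (0 ≤ -D2 * D4 ∧ 0 ≤ D3 * D4 ∧ 0 ≤ D1 * D4)) ∧
     (¬ (0 ≤ D2 * D1 ∧ 0 ≤ -D3 * D1 ∧ 0 ≤ D4 * D1))) ↔
    (Real.sign D1, Real.sign D2, Real.sign D3, Real.sign D4) ∈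
      ({(1, 1, 1, 1), (-1, -1, -1, -1), (1, 1, -1, -1), (-1, -1, 1, 1),
        (-1, 1, 1, -1), (1, -1, -1, 1)} : Set (ℝ × ℝ × ℝ × ℝ)) := by
  rcases h1.lt_or_gt with e1 | e1 <;> rcases h2.lt_or_gt with e2 | e2 <;>
    rcases h3.lt_or_gt with e3 | e3 <;> rcases h4.lt_or_gt with e4 | e4
  · rw [Real.sign_of_neg e1, Real.sign_of_neg e2, Real.sign_of_neg e3, Real.sign_of_neg e4]
    constructor
    · intro _
      norm_num [Set.mem_insert_iff, Set.mem_singleton_iff, Prod.ext_iff]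
    · intro _
      exact ⟨fun hh => absurd hh.2.1 (by rw [neg_mul]; exact not_le.mpr (neg_lt_zero.mpr (mul_pos_of_neg_of_neg e4 e2))), fun hh => absurd hh.2.2 (by rw [neg_mul]; exact not_le.mpr (neg_lt_zero.mpr (mul_pos_of_neg_of_neg e1 e3))), fun hh => absurd hh.1 (by rw [neg_mul]; exact not_le.mpr (neg_lt_zero.mpr (mul_pos_of_neg_of_neg e2 e4))), fun hh => absurd hh.2.1 (by rw [neg_mul]; exact not_le.mpr (neg_lt_zero.mpr (mul_pos_of_neg_of_neg e3 e1)))⟩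
  · rw [Real.sign_of_neg e1, Real.sign_of_neg e2, Real.sign_of_neg e3, Real.sign_of_pos e4]
    constructor
    · intro hk
      exact absurd ⟨(mul_pos_of_neg_of_neg e3 e2).le, by rw [neg_mul]; exact neg_nonneg.mpr (mul_neg_of_pos_of_neg e4 e2).le, (mul_pos_of_neg_of_neg e1 e2).le⟩ hk.1
    · intro hmem
      norm_num [Set.mem_insert_iff, Set.mem_singleton_iff, Prod.ext_iff] at hmem
  · rw [Real.sign_of_neg e1, Real.sign_of_neg e2, Real.sign_of_pos e3, Real.sign_of_neg e4]
    constructor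
    · intro hk
      exact absurd ⟨(mul_pos_of_neg_of_neg e2 e1).le, by rw [neg_mul]; exact neg_nonneg.mpr (mul_neg_of_pos_of_neg e3 e1).le, (mul_pos_of_neg_of_neg e4 e1).le⟩ hk.2.2.2
    · intro hmem
      norm_num [Set.mem_insert_iff, Set.mem_singleton_iff, Prod.ext_iff] at hmem
  · rw [Real.sign_of_neg e1, Real.sign_of_neg e2, Real.sign_of_pos e3, Real.sign_of_pos e4]
    constructor
    · intro _
      norm_num [Set.mem_insert_iff, Set.mem_singleton_iff, Prod.ext_iff]
    · intro _
      exact ⟨fun hh => absurd hh.1 (not_le.mpr (mul_neg_of_pos_of_neg e3 e2)), fun hh => absurd hh.1 (not_le.mpr (mul_neg_of_neg_of_pos e2 e3)), fun hh => absurd hh.2.2 (not_le.mpr (mul_neg_of_neg_of_pos e1 e4)), fun hh => absurd hh.2.2 (not_le.mpr (mul_neg_of_pos_of_neg e4 e1))⟩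
  · rw [Real.sign_of_neg e1, Real.sign_of_pos e2, Real.sign_of_neg e3, Real.sign_of_neg e4]
    constructor
    · intro hk
      exact absurd ⟨by rw [neg_mul]; exact neg_nonneg.mpr (mul_neg_of_pos_of_neg e2 e4).le, (mul_pos_of_neg_of_neg e3 e4).le, (mul_pos_of_neg_of_neg e1 e4).le⟩ hk.2.2.1
    · intro hmem
      norm_num [Set.mem_insert_iff, Set.mem_singleton_iff, Prod.ext_iff] at hmem
  · exact absurd hid (by intro _; linarith)
  · rw [Real.sign_of_neg e1, Real.sign_of_pos e2, Real.sign_of_pos e3, Real.sign_of_neg e4]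
    constructor
    · intro _
      norm_num [Set.mem_insert_iff, Set.mem_singleton_iff, Prod.ext_iff]
    · intro _
      exact ⟨fun hh => absurd hh.2.2 (not_le.mpr (mul_neg_of_neg_of_pos e1 e2)), fun hh => absurd hh.2.1 (not_le.mpr (mul_neg_of_neg_of_pos e4 e3)), fun hh => absurd hh.2.1 (not_le.mpr (mul_neg_of_pos_of_neg e3 e4)), fun hh => absurd hh.1 (not_le.mpr (mul_neg_of_pos_of_neg e2 e1))⟩
  · rw [Real.sign_of_neg e1, Real.sign_of_pos e2, Real.sign_of_pos e3, Real.sign_of_pos e4]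
    constructor
    · intro hk
      exact absurd ⟨(mul_pos e2 e3).le, (mul_pos e4 e3).le, by rw [neg_mul]; exact neg_nonneg.mpr (mul_neg_of_neg_of_pos e1 e3).le⟩ hk.2.1
    · intro hmem
      norm_num [Set.mem_insert_iff, Set.mem_singleton_iff, Prod.ext_iff] at hmem
  · rw [Real.sign_of_pos e1, Real.sign_of_neg e2, Real.sign_of_neg e3, Real.sign_of_neg e4]
    constructor
    · intro hk
      exact absurd ⟨(mul_pos_of_neg_of_neg e2 e3).le, (mul_pos_of_neg_of_neg e4 e3).le, by rw [neg_mul]; exact neg_nonneg.mpr (mul_neg_of_pos_of_neg e1 e3).le⟩ hk.2.1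
    · intro hmem
      norm_num [Set.mem_insert_iff, Set.mem_singleton_iff, Prod.ext_iff] at hmem
  · rw [Real.sign_of_pos e1, Real.sign_of_neg e2, Real.sign_of_neg e3, Real.sign_of_pos e4]
    constructor
    · intro _
      norm_num [Set.mem_insert_iff, Set.mem_singleton_iff, Prod.ext_iff]
    · intro _
      exact ⟨fun hh => absurd hh.2.2 (not_le.mpr (mul_neg_of_pos_of_neg e1 e2)), fun hh => absurd hh.2.1 (not_le.mpr (mul_neg_of_pos_of_neg e4 e3)), fun hh => absurd hh.2.1 (not_le.mpr (mul_neg_of_neg_of_pos e3 e4)), fun hh => absurd hh.1 (not_le.mpr (mul_neg_of_neg_of_pos e2 e1))⟩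
  · exact absurd hid (by intro _; linarith)
  · rw [Real.sign_of_pos e1, Real.sign_of_neg e2, Real.sign_of_pos e3, Real.sign_of_pos e4]
    constructor
    · intro hk
      exact absurd ⟨by rw [neg_mul]; exact neg_nonneg.mpr (mul_neg_of_neg_of_pos e2 e4).le, (mul_pos e3 e4).le, (mul_pos e1 e4).le⟩ hk.2.2.1
    · intro hmem
      norm_num [Set.mem_insert_iff, Set.mem_singleton_iff, Prod.ext_iff] at hmem
  · rw [Real.sign_of_pos e1, Real.sign_of_pos e2, Real.sign_of_neg e3, Real.sign_of_neg e4]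
    constructor
    · intro _
      norm_num [Set.mem_insert_iff, Set.mem_singleton_iff, Prod.ext_iff]
    · intro _
      exact ⟨fun hh => absurd hh.1 (not_le.mpr (mul_neg_of_neg_of_pos e3 e2)), fun hh => absurd hh.1 (not_le.mpr (mul_neg_of_pos_of_neg e2 e3)), fun hh => absurd hh.2.2 (not_le.mpr (mul_neg_of_pos_of_neg e1 e4)), fun hh => absurd hh.2.2 (not_le.mpr (mul_neg_of_neg_of_pos e4 e1))⟩
  · rw [Real.sign_of_pos e1, Real.sign_of_pos e2, Real.sign_of_neg e3, Real.sign_of_pos e4]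
    constructor
    · intro hk
      exact absurd ⟨(mul_pos e2 e1).le, by rw [neg_mul]; exact neg_nonneg.mpr (mul_neg_of_neg_of_pos e3 e1).le, (mul_pos e4 e1).le⟩ hk.2.2.2
    · intro hmem
      norm_num [Set.mem_insert_iff, Set.mem_singleton_iff, Prod.ext_iff] at hmem
  · rw [Real.sign_of_pos e1, Real.sign_of_pos e2, Real.sign_of_pos e3, Real.sign_of_neg e4]
    constructor
    · intro hk
      exact absurd ⟨(mul_pos e3 e2).le, by rw [neg_mul]; exact neg_nonneg.mpr (mul_neg_of_neg_of_pos e4 e2).le, (mul_pos e1 e2).le⟩ hk.1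
    · intro hmem
      norm_num [Set.mem_insert_iff, Set.mem_singleton_iff, Prod.ext_iff] at hmem
  · rw [Real.sign_of_pos e1, Real.sign_of_pos e2, Real.sign_of_pos e3, Real.sign_of_pos e4]
    constructor
    · intro _
      norm_num [Set.mem_insert_iff, Set.mem_singleton_iff, Prod.ext_iff]
    · intro _
      exact ⟨fun hh => absurd hh.2.1 (by rw [neg_mul]; exact not_le.mpr (neg_lt_zero.mpr (mul_pos e4 e2))), fun hh => absurd hh.2.2 (by rw [neg_mul]; exact not_le.mpr (neg_lt_zero.mpr (mul_pos e1 e3))), fun hh => absurd hh.1 (by rw [neg_mul]; exact not_le.mpr (neg_lt_zero.mpr (mul_pos e2 e4))), fun hh => absurd hh.2.1 (by rw [neg_mul]; exact not_le.mpr (neg_lt_zero.mpr (mul_pos e3 e1)))⟩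

theorem stmt_6 (a b c d : ℝ × ℝ)
    (hdist : List.Pairwise (· ≠ ·) [a, b, c, d])
    (hgp : GenPos {a, b, c, d}) :
    ConvexPos {a, b, c, d} ↔
      (chi a b c, chi b c d, chi c d a, chi d a b) ∈
        ({(1, 1, 1, 1), (-1, -1, -1, -1), (1, 1, -1, -1), (-1, -1, 1, 1),
          (-1, 1, 1, -1), (1, -1, -1, 1)} : Set (ℝ × ℝ × ℝ × ℝ)) := by
  simp only [List.pairwise_cons, List.mem_cons, List.not_mem_nil, List.mem_singleton,
    forall_eq_or_imp, forall_eq, or_false, List.Pairwise.nil] at hdist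
  obtain ⟨⟨hab, hac, had⟩, ⟨hbc, hbd⟩, hcd, -⟩ := hdist
  have hD1 : det2 a b c ≠ 0 := fun h =>
    hgp a (by simp) b (by simp) c (by simp) hab hac hbc (collinear_of_det2 h)
  have hD2 : det2 b c d ≠ 0 := fun h =>
    hgp b (by simp) c (by simp) d (by simp) hbc hbd hcd (collinear_of_det2 h)
  have hD3 : det2 c d a ≠ 0 := fun h =>
    hgp c (by simp) d (by simp) a (by simp) hcd hac.symm had.symm (collinear_of_det2 h)
  have hD4 : det2 d a b ≠ 0 := fun h =>
    hgp d (by simp) a (by simp) b (by simp) had.symm hbd.symm hab (collinear_of_det2 h)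
  have hacd : det2 a c d ≠ 0 := by
    rw [show det2 a c d = det2 c d a from by simp only [det2]; ring]; exact hD3
  have habd : det2 a b d ≠ 0 := by
    rw [show det2 a b d = det2 d a b from by simp only [det2]; ring]; exact hD4
  have hid : det2 a b c + det2 c d a = det2 b c d + det2 d a b := by
    simp only [det2]; ring
  have hsa : ({a, b, c, d} : Set (ℝ × ℝ)) \ {a} = {b, c, d} := by
    ext x
    simp only [Set.mem_diff, Set.mem_insert_iff, Set.mem_singleton_iff]
    constructor
    · rintro ⟨h1, h2⟩
      rcases h1 with rfl | rfl | rfl | rfl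
      · exact absurd rfl h2
      all_goals tauto
    · rintro (rfl | rfl | rfl)
      exacts [⟨by tauto, hab.symm⟩, ⟨by tauto, hac.symm⟩, ⟨by tauto, had.symm⟩]
  have hsb : ({a, b, c, d} : Set (ℝ × ℝ)) \ {b} = {a, c, d} := by
    ext x
    simp only [Set.mem_diff, Set.mem_insert_iff, Set.mem_singleton_iff]
    constructor
    · rintro ⟨h1, h2⟩
      rcases h1 with rfl | rfl | rfl | rfl
      · tauto
      · exact absurd rfl h2
      all_goals tauto
    · rintro (rfl | rfl | rfl)
      exacts [⟨by tauto, hab⟩, ⟨by tauto, hbc.symm⟩, ⟨by tauto, hbd.symm⟩]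
  have hsc : ({a, b, c, d} : Set (ℝ × ℝ)) \ {c} = {a, b, d} := by
    ext x
    simp only [Set.mem_diff, Set.mem_insert_iff, Set.mem_singleton_iff]
    constructor
    · rintro ⟨h1, h2⟩
      rcases h1 with rfl | rfl | rfl | rfl
      · tauto
      · tauto
      · exact absurd rfl h2
      · tauto
    · rintro (rfl | rfl | rfl)
      exacts [⟨by tauto, hac⟩, ⟨by tauto, hbc⟩, ⟨by tauto, hcd.symm⟩]
  have hsd : ({a, b, c, d} : Set (ℝ × ℝ)) \ {d} = {a, b, c} := by
    ext x
    simp only [Set.mem_diff, Set.mem_insert_iff, Set.mem_singleton_iff]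
    constructor
    · rintro ⟨h1, h2⟩
      rcases h1 with rfl | rfl | rfl | rfl
      · tauto
      · tauto
      · tauto
      · exact absurd rfl h2
    · rintro (rfl | rfl | rfl)
      exacts [⟨by tauto, had⟩, ⟨by tauto, hbd⟩, ⟨by tauto, hcd⟩]
  have hcp : ConvexPos {a, b, c, d} ↔
      (a ∉ convexHull ℝ ({b, c, d} : Set (ℝ × ℝ)) ∧
       b ∉ convexHull ℝ ({a, c, d} : Set (ℝ × ℝ)) ∧
       c ∉ convexHull ℝ ({a, b, d} : Set (ℝ × ℝ)) ∧
       d ∉ convexHull ℝ ({a, b, c} : Set (ℝ × ℝ))) := by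
    constructor
    · intro h
      refine ⟨?_, ?_, ?_, ?_⟩
      · have := h a (by simp); rwa [hsa] at this
      · have := h b (by simp); rwa [hsb] at this
      · have := h c (by simp); rwa [hsc] at this
      · have := h d (by simp); rwa [hsd] at this
    · rintro ⟨q1, q2, q3, q4⟩ p hp
      simp only [Set.mem_insert_iff, Set.mem_singleton_iff] at hp
      rcases hp with rfl | rfl | rfl | rfl
      · rw [hsa]; exact q1
      · rw [hsb]; exact q2
      · rw [hsc]; exact q3
      · rw [hsd]; exact q4
  rw [hcp, mem_triangle_iff b c d a hD2, mem_triangle_iff a c d b hacd,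
    mem_triangle_iff a b d c habd, mem_triangle_iff a b c d hD1,
    show det2 b a d = -det2 d a b from by simp only [det2]; ring,
    show det2 b c a = det2 a b c from by simp only [det2]; ring,
    show det2 a c b = -det2 a b c from by simp only [det2]; ring,
    show det2 c b d = -det2 b c d from by simp only [det2]; ring,
    show det2 d b c = det2 b c d from by simp only [det2]; ring,
    show det2 a d c = -det2 c d a from by simp only [det2]; ring,
    show det2 a b d = det2 d a b from by simp only [det2]; ring,
    show det2 a c d = det2 c d a from by simp only [det2]; ring]
  simp only [chi]
  exact key_signs (det2 a b c) (det2 b c d) (det2 c d a) (det2 d a b) hD1 hD2 hD3 hD4 hid
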